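/- Every g ∈ SL₂(ℝ) can be written as g = k₁·u·k₂ with k₁, k₂ ∈ SO(2) and u an upper triangular matrix with both diagonal entries equal to 1. (Kostant decomposition G = KUK for the rank-one group SL₂(ℝ).) -/

import Mathlib

open Matrix

private lemma exists_cos_sin (u v : ℝ) (h : u ^ 2 + v ^ 2 = 1) :
    ∃ θ : ℝ, Real.cos θ = u ∧ Real.sin θ = v := by
  have hz : (Complex.mk u v) ≠ 0 := by
    intro h0
    have hu : u = 0 := congrArg Complex.re h0
    have hv : v = 0 := congrArg Complex.im h0
    rw [hu, hv] at h; norm_num at h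
  have habs : ‖Complex.mk u v‖ = 1 := by
    rw [Complex.norm_def, Complex.normSq_mk]
    have : u * u + v * v = 1 := by nlinarith
    rw [this, Real.sqrt_one]
  refine ⟨Complex.arg (Complex.mk u v), ?_, ?_⟩
  · rw [Complex.cos_arg hz, habs]; simp
  · rw [Complex.sin_arg, habs]; simp

private lemma transpose_fin_two' {α : Type*} (a b c d : α) :
    (!![a, b; c, d])ᵀ = !![a, c; b, d] := by
  ext i j
  fin_cases i <;> fin_cases j <;> rfl

private lemma rot_mem_sl2 (θ : ℝ) :
    Matrix.det !![Real.cos θ, -Real.sin θ; Real.sin θ, Real.cos θ] = 1 := by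
  rw [Matrix.det_fin_two_of]
  nlinarith [Real.sin_sq_add_cos_sq θ]

private lemma rot_orth (θ : ℝ) :
    (!![Real.cos θ, -Real.sin θ; Real.sin θ, Real.cos θ])ᵀ *
      !![Real.cos θ, -Real.sin θ; Real.sin θ, Real.cos θ] = 1 := by
  rw [transpose_fin_two', Matrix.mul_fin_two,
    show Real.cos θ * Real.cos θ + Real.sin θ * Real.sin θ = 1 by
      nlinarith [Real.sin_sq_add_cos_sq θ],
    show Real.cos θ * -Real.sin θ + Real.sin θ * Real.cos θ = 0 by ring,
    show -Real.sin θ * Real.cos θ + Real.cos θ * Real.sin θ = 0 by ring,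
    show -Real.sin θ * -Real.sin θ + Real.cos θ * Real.cos θ = 1 by
      nlinarith [Real.sin_sq_add_cos_sq θ], ← Matrix.one_fin_two]

set_option maxHeartbeats 1000000 in
/-- Kostant decomposition of `SL₂(ℝ)`: every `g` can be written as
`k₁·u·k₂` with `k₁, k₂ ∈ SO(2)` and `u` unipotent upper triangular. -/
theorem sl2_real_kostant_decomposition
    (g : Matrix.SpecialLinearGroup (Fin 2) ℝ) :
    ∃ k₁ k₂ : Matrix.SpecialLinearGroup (Fin 2) ℝ, ∃ x : ℝ,
      (k₁ : Matrix (Fin 2) (Fin 2) ℝ)ᵀ * (k₁ : Matrix (Fin 2) (Fin 2) ℝ) = 1 ∧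
      (k₂ : Matrix (Fin 2) (Fin 2) ℝ)ᵀ * (k₂ : Matrix (Fin 2) (Fin 2) ℝ) = 1 ∧
      (g : Matrix (Fin 2) (Fin 2) ℝ)
        = (k₁ : Matrix (Fin 2) (Fin 2) ℝ) * !![1, x; 0, 1] * (k₂ : Matrix (Fin 2) (Fin 2) ℝ) := by
  obtain ⟨a, b, c, d, hg, hdet⟩ :
      ∃ a b c d : ℝ, (g : Matrix (Fin 2) (Fin 2) ℝ) = !![a, b; c, d] ∧ a * d - b * c = 1 := by
    refine ⟨_, _, _, _, Matrix.eta_fin_two _, ?_⟩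
    have := g.2
    rw [Matrix.det_fin_two] at this
    exact this
  by_cases h0 : (a - d) ^ 2 + (b + c) ^ 2 = 0
  · -- g itself is a rotation
    have had : a = d := by nlinarith [sq_nonneg (a - d), sq_nonneg (b + c)]
    have hbc : b = -c := by nlinarith [sq_nonneg (a - d), sq_nonneg (b + c)]
    refine ⟨g, 1, 0, ?_, ?_, ?_⟩
    · rw [hg, transpose_fin_two', Matrix.mul_fin_two,
        show a * a + c * c = 1 by linear_combination hdet + a * had + c * hbc,
        show a * b + c * d = 0 by linear_combination b * had + d * hbc,
        show b * a + d * c = 0 by linear_combination b * had + d * hbc,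
        show b * b + d * d = 1 by linear_combination hdet - d * had + b * hbc,
        ← Matrix.one_fin_two]
    · simp
    · simp [hg, Matrix.mul_fin_two, ← Matrix.one_fin_two]
  · obtain ⟨x, hxpos, hx2⟩ : ∃ x : ℝ, 0 < x ∧ x ^ 2 = (a - d) ^ 2 + (b + c) ^ 2 := by
      refine ⟨Real.sqrt ((a - d) ^ 2 + (b + c) ^ 2), ?_, Real.sq_sqrt (by positivity)⟩
      apply Real.sqrt_pos.2
      rcases lt_or_eq_of_le (by positivity : (0:ℝ) ≤ (a - d) ^ 2 + (b + c) ^ 2) with h | h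
      · exact h
      · exact absurd h.symm h0
    have hxne : x ≠ 0 := ne_of_gt hxpos
    have h4x : (4 : ℝ) + x ^ 2 ≠ 0 := by positivity
    obtain ⟨θs, hcs, hss⟩ := exists_cos_sin
      ((2 * (a + d) + x * (b - c)) / (4 + x ^ 2))
      ((x * (a + d) - 2 * (b - c)) / (4 + x ^ 2))
      (by field_simp; nlinarith)
    obtain ⟨θd, hcd, hsd⟩ := exists_cos_sin ((b + c) / x) ((a - d) / x)
      (by field_simp; nlinarith)
    obtain ⟨α, β, hsum, hdiff⟩ : ∃ α β : ℝ, α + β = θs ∧ β - α = θd :=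
      ⟨(θs - θd) / 2, (θs + θd) / 2, by ring, by ring⟩
    have e1 : Real.cos α * Real.cos β - Real.sin α * Real.sin β
        = (2 * (a + d) + x * (b - c)) / (4 + x ^ 2) := by
      rw [← hcs, ← hsum, Real.cos_add]
    have e2 : Real.sin α * Real.cos β + Real.cos α * Real.sin β
        = (x * (a + d) - 2 * (b - c)) / (4 + x ^ 2) := by
      rw [← hss, ← hsum, Real.sin_add]
    have e3 : Real.cos β * Real.cos α + Real.sin β * Real.sin α = (b + c) / x := by
      rw [← hcd, ← hdiff, Real.cos_sub]
    have e4 : Real.sin β * Real.cos α - Real.cos β * Real.sin α = (a - d) / x := by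
      rw [← hsd, ← hdiff, Real.sin_sub]
    have ecc : Real.cos α * Real.cos β
        = ((2 * (a + d) + x * (b - c)) / (4 + x ^ 2) + (b + c) / x) / 2 := by
      nlinarith [e1, e3]
    have ess : Real.sin α * Real.sin β
        = ((b + c) / x - (2 * (a + d) + x * (b - c)) / (4 + x ^ 2)) / 2 := by
      nlinarith [e1, e3]
    have ecs : Real.cos α * Real.sin β
        = ((x * (a + d) - 2 * (b - c)) / (4 + x ^ 2) + (a - d) / x) / 2 := by
      nlinarith [e2, e4]
    have esc : Real.sin α * Real.cos β
        = ((x * (a + d) - 2 * (b - c)) / (4 + x ^ 2) - (a - d) / x) / 2 := by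
      nlinarith [e2, e4]
    refine ⟨⟨!![Real.cos α, -Real.sin α; Real.sin α, Real.cos α], rot_mem_sl2 α⟩,
      ⟨!![Real.cos β, -Real.sin β; Real.sin β, Real.cos β], rot_mem_sl2 β⟩, x,
      rot_orth α, rot_orth β, ?_⟩
    show (g : Matrix (Fin 2) (Fin 2) ℝ) =
      !![Real.cos α, -Real.sin α; Real.sin α, Real.cos α] * !![1, x; 0, 1] *
        !![Real.cos β, -Real.sin β; Real.sin β, Real.cos β]
    rw [hg, Matrix.mul_fin_two, Matrix.mul_fin_two]
    rw [show (Real.cos α * 1 + -Real.sin α * 0) * Real.cos β + (Real.cos α * x + -Real.sin α * 1) * Real.sin β = a by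
        rw [show (Real.cos α * 1 + -Real.sin α * 0) * Real.cos β + (Real.cos α * x + -Real.sin α * 1) * Real.sin β
          = Real.cos α * Real.cos β + x * (Real.cos α * Real.sin β) - Real.sin α * Real.sin β by ring,
          ecc, ecs, ess]
        field_simp
        ring,
      show (Real.cos α * 1 + -Real.sin α * 0) * -Real.sin β + (Real.cos α * x + -Real.sin α * 1) * Real.cos β = b by
        rw [show (Real.cos α * 1 + -Real.sin α * 0) * -Real.sin β + (Real.cos α * x + -Real.sin α * 1) * Real.cos β
          = x * (Real.cos α * Real.cos β) - Real.cos α * Real.sin β - Real.sin α * Real.cos β by ring,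
          ecc, ecs, esc]
        field_simp
        ring,
      show (Real.sin α * 1 + Real.cos α * 0) * Real.cos β + (Real.sin α * x + Real.cos α * 1) * Real.sin β = c by
        rw [show (Real.sin α * 1 + Real.cos α * 0) * Real.cos β + (Real.sin α * x + Real.cos α * 1) * Real.sin β
          = Real.sin α * Real.cos β + x * (Real.sin α * Real.sin β) + Real.cos α * Real.sin β by ring,
          esc, ess, ecs]
        field_simp
        ring,
      show (Real.sin α * 1 + Real.cos α * 0) * -Real.sin β + (Real.sin α * x + Real.cos α * 1) * Real.cos β = d by
        rw [show (Real.sin α * 1 + Real.cos α * 0) * -Real.sin β + (Real.sin α * x + Real.cos α * 1) * Real.cos β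
          = x * (Real.sin α * Real.cos β) - Real.sin α * Real.sin β + Real.cos α * Real.cos β by ring,
          esc, ess, ecc]
        field_simp
        ring]
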